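/- Let (V,E) be a finite temporal graph over timestamps {0,…,T} with |V| ≥ 2 and let α ∈ (0,1]. Then the temporal network inefficiency I of (V,E) equals 0 if and only if for every pair of distinct vertices u, v ∈ V there exists a timestamp t with (u,v,t) ∈ E (equivalently, every ordered pair of distinct vertices has shortest-fastest-path distance exactly α). -/

import Mathlib

open scoped ENNReal BigOperators

variable {V : Type*}

/-- `p` is a temporal path from `u` to `v` with edges in `E`:
a nonempty list of timestamped edges, consecutive in space and
with nondecreasing timestamps. -/
def IsTempPath (E : Set (V × V × ℕ)) (u v : V) (p : List (V × V × ℕ)) : Prop :=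
  p ≠ [] ∧ (∀ e ∈ p, e ∈ E) ∧
    List.Chain' (fun e f : V × V × ℕ => e.2.1 = f.1 ∧ e.2.2 ≤ f.2.2) p ∧
    p.head?.map Prod.fst = some u ∧
    p.getLast?.map (fun e => e.2.1) = some v

/-- Timestamp of the first edge of a temporal path. -/
def firstTime (p : List (V × V × ℕ)) : ℕ := (p.head?.map (fun e => e.2.2)).getD 0

/-- Timestamp of the last edge of a temporal path. -/
def lastTime (p : List (V × V × ℕ)) : ℕ := (p.getLast?.map (fun e => e.2.2)).getD 0

/-- Cost `L_α(p) = α·(number of edges) + (1-α)·(t_n - t_0)` of a temporal path. -/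
noncomputable def costL (α : ℝ) (p : List (V × V × ℕ)) : ℝ :=
  α * p.length + (1 - α) * ((lastTime p : ℝ) - (firstTime p : ℝ))

/-- Shortest-fastest-path distance: infimum of `L_α` over temporal paths from `u` to `v`,
taken in `ℝ≥0∞` (so `∞` if no temporal path exists). -/
noncomputable def sfpDist (α : ℝ) (E : Set (V × V × ℕ)) (u v : V) : ℝ≥0∞ :=
  sInf {c : ℝ≥0∞ | ∃ p, IsTempPath E u v p ∧ c = ENNReal.ofReal (costL α p)}

/-- Adjacency of the transformed graph `G'` on `V × {0,…,T}`:
waiting edges `(v,t) → (v,t+1)` and snapshot edges `(u,t) → (v,t)` for `(u,v,t) ∈ E`. -/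
def TransAdj (E : Set (V × V × ℕ)) (T : ℕ) : V × ℕ → V × ℕ → Prop := fun a b =>
  (a.1 = b.1 ∧ b.2 = a.2 + 1 ∧ b.2 ≤ T) ∨ ((a.1, b.1, a.2) ∈ E ∧ b.2 = a.2)

/-- Weight of an edge of the transformed graph: `α` for snapshot edges (same timestamp),
`1 - α` for waiting edges. -/
noncomputable def transWeight (α : ℝ) (a b : V × ℕ) : ℝ := if a.2 = b.2 then α else 1 - α

/-- Length `ℓ` of a path in the transformed graph (given as its list of visited vertices):
the sum of the weights of its edges. -/
noncomputable def transLen (α : ℝ) (p : List (V × ℕ)) : ℝ :=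
  ((p.zip p.tail).map fun ab => transWeight α ab.1 ab.2).sum

/-- `p` is a directed path in the transformed graph from `x` to `y`,
given as its (nonempty) list of visited vertices. -/
def IsTransPath (E : Set (V × V × ℕ)) (T : ℕ) (x y : V × ℕ) (p : List (V × ℕ)) : Prop :=
  p ≠ [] ∧ List.Chain' (TransAdj E T) p ∧ p.head? = some x ∧ p.getLast? = some y

/-- Projection of a transformed-graph path to a list of timestamped edges:
delete the waiting edges and read each snapshot edge `((x,t),(y,t))` as `(x,y,t)`. -/
def project (p : List (V × ℕ)) : List (V × V × ℕ) :=
  ((p.zip p.tail).filter fun ab => ab.1.2 == ab.2.2).map fun ab => (ab.1.1, ab.2.1, ab.1.2)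

/-- Shortest-path distance in the transformed graph, in `ℝ≥0∞`. -/
noncomputable def transDist (E : Set (V × V × ℕ)) (T : ℕ) (α : ℝ) (x y : V × ℕ) : ℝ≥0∞ :=
  sInf {c : ℝ≥0∞ | ∃ p, IsTransPath E T x y p ∧ c = ENNReal.ofReal (transLen α p)}

/-- Shortest-path distance (number of edges) in a static graph with adjacency `A`,
in `ℝ≥0∞`: the infimum of the number of edges over (nonempty) walks from `u` to `v`. -/
noncomputable def staticDist (A : V → V → Prop) (u v : V) : ℝ≥0∞ :=
  sInf {c : ℝ≥0∞ | ∃ p : List (V × V), p ≠ [] ∧ (∀ e ∈ p, A e.1 e.2) ∧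
    List.Chain' (fun e f : V × V => e.2 = f.1) p ∧
    p.head?.map Prod.fst = some u ∧ p.getLast?.map Prod.snd = some v ∧
    c = (p.length : ℝ≥0∞)}

/-- Per-pair temporal inefficiency `[(1 - α/d(v,u)) + (1 - α/d(u,v))]/2`,
with the convention `α/∞ = 0` (via `ENNReal.toReal`). -/
noncomputable def perPairIneff (α : ℝ) (E : Set (V × V × ℕ)) (u v : V) : ℝ :=
  ((1 - α / (sfpDist α E v u).toReal) + (1 - α / (sfpDist α E u v).toReal)) / 2

/-- Temporal network inefficiency: the sum of the per-pair inefficiency over unordered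
pairs of distinct vertices (the summand is symmetric, so we sum over ordered pairs and
halve). -/
noncomputable def tempIneff (α : ℝ) (E : Set (V × V × ℕ)) [Fintype V] [DecidableEq V] : ℝ :=
  (∑ q ∈ Finset.univ.offDiag, perPairIneff α E (Prod.fst q) (Prod.snd q)) / 2

/-- Temporal edges of the subgraph induced by `S`. -/
def inducedE (E : Set (V × V × ℕ)) (S : Set V) : Set (V × V × ℕ) :=
  {e ∈ E | e.1 ∈ S ∧ e.2.1 ∈ S}

/-- Temporal network inefficiency of the temporal subgraph induced by a finite set `S`. -/
noncomputable def tempIneffOn (α : ℝ) (E : Set (V × V × ℕ)) [DecidableEq V]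
    (S : Finset V) : ℝ :=
  (∑ q ∈ S.offDiag, perPairIneff α (inducedE E ↑S) (Prod.fst q) (Prod.snd q)) / 2

/-- Static network inefficiency `Σ_{u ≠ v ∈ S} (1 - 1/d_{G[S]}(u,v))` (unordered pairs,
with `1/∞ = 0`) of the subgraph induced by `S` in the static graph with adjacency `A`. -/
noncomputable def staticIneffOn (A : V → V → Prop) [DecidableEq V] (S : Finset V) : ℝ :=
  (∑ q ∈ S.offDiag,
    (1 - 1 / (staticDist (fun x y => A x y ∧ x ∈ S ∧ y ∈ S)
      (Prod.fst q) (Prod.snd q)).toReal)) / 2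

section MyAux

variable {α : ℝ} {E : Set (V × V × ℕ)}

lemma myFirstTime_le_lastTime {p : List (V × V × ℕ)}
    (hc : List.Chain' (fun e f : V × V × ℕ => e.2.1 = f.1 ∧ e.2.2 ≤ f.2.2) p)
    (hne : p ≠ []) : firstTime p ≤ lastTime p := by
  induction p with
  | nil => simp at hne
  | cons a l ih =>
    cases l with
    | nil => simp [firstTime, lastTime]
    | cons b m =>
      have h1 : a.2.2 ≤ b.2.2 := (List.isChain_cons_cons.mp hc).1.2
      have h2 := ih (List.isChain_cons_cons.mp hc).2 (by simp)
      simp only [firstTime, lastTime, List.head?_cons, List.getLast?_cons_cons,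
        Option.map_some, Option.getD_some] at h2 ⊢
      omega

lemma myCostL_ge_mul (hα1 : α ≤ 1) {u v : V} {p : List (V × V × ℕ)}
    (hp : IsTempPath E u v p) : α * p.length ≤ costL α p := by
  obtain ⟨hne, -, hc, -, -⟩ := hp
  have h := myFirstTime_le_lastTime hc hne
  have h0 : (0:ℝ) ≤ (1 - α) * ((lastTime p : ℝ) - (firstTime p : ℝ)) := by
    apply mul_nonneg (by linarith)
    have : (firstTime p : ℝ) ≤ (lastTime p : ℝ) := by exact_mod_cast h
    linarith
  unfold costL; linarith

lemma myLe_sfpDist (hα0 : 0 < α) (hα1 : α ≤ 1) (u v : V) :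
    ENNReal.ofReal α ≤ sfpDist α E u v := by
  refine le_sInf ?_
  rintro c ⟨p, hp, rfl⟩
  refine ENNReal.ofReal_le_ofReal ?_
  have h1 : (1:ℝ) ≤ p.length := by exact_mod_cast List.length_pos_iff.mpr hp.1
  have h2 := myCostL_ge_mul hα1 hp
  nlinarith

lemma mySfpDist_le_of_edge {u v : V} {t : ℕ} (h : (u, v, t) ∈ E) :
    sfpDist α E u v ≤ ENNReal.ofReal α := by
  apply sInf_le
  refine ⟨[(u, v, t)], ⟨by simp, by simpa using h, List.isChain_singleton _, by simp, by simp⟩, ?_⟩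
  simp [costL, firstTime, lastTime]

lemma myExists_edge_of_sfpDist (hα0 : 0 < α) (hα1 : α ≤ 1) {u v : V}
    (h : sfpDist α E u v = ENNReal.ofReal α) : ∃ t, (u, v, t) ∈ E := by
  by_contra hno
  push_neg at hno
  have h2 : ENNReal.ofReal (2 * α) ≤ sfpDist α E u v := by
    refine le_sInf ?_
    rintro c ⟨p, hp, rfl⟩
    refine ENNReal.ofReal_le_ofReal ?_
    have hlen : 2 ≤ p.length := by
      rcases p with - | ⟨e, l⟩
      · exact absurd rfl hp.1
      rcases l with - | ⟨f, m⟩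
      · exfalso
        obtain ⟨-, hmem, -, hh, hl⟩ := hp
        obtain ⟨a, b, c⟩ := e
        simp at hh hl
        subst hh; subst hl
        exact hno c (hmem _ (by simp))
      · simp
    have h3 := myCostL_ge_mul hα1 hp
    have h4 : α * 2 ≤ α * p.length := by
      apply mul_le_mul_of_nonneg_left _ hα0.le
      exact_mod_cast hlen
    linarith
  rw [h] at h2
  have := (ENNReal.ofReal_le_ofReal_iff hα0.le).mp h2
  linarith

lemma myTerm_nonneg (hα0 : 0 < α) (hα1 : α ≤ 1) (u v : V) :
    0 ≤ 1 - α / (sfpDist α E u v).toReal := by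
  by_cases hd : sfpDist α E u v = ∞
  · simp [hd]
  · have h1 : ENNReal.ofReal α ≤ sfpDist α E u v := myLe_sfpDist hα0 hα1 u v
    have h2 : α ≤ (sfpDist α E u v).toReal :=
      (ENNReal.ofReal_le_iff_le_toReal hd).mp h1
    have h3 : 0 < (sfpDist α E u v).toReal := lt_of_lt_of_le hα0 h2
    have h4 : α / (sfpDist α E u v).toReal ≤ 1 := (div_le_one h3).mpr (by linarith)
    linarith

lemma myTerm_eq_zero_iff (hα0 : 0 < α) (hα1 : α ≤ 1) (u v : V) :
    1 - α / (sfpDist α E u v).toReal = 0 ↔ sfpDist α E u v = ENNReal.ofReal α := by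
  constructor
  · intro h
    have hd0 : (sfpDist α E u v).toReal ≠ 0 := by
      intro h0; rw [h0] at h; simp at h
    have h1 : α / (sfpDist α E u v).toReal = 1 := by linarith
    have hval : (sfpDist α E u v).toReal = α := by
      field_simp at h1; linarith
    have hne : sfpDist α E u v ≠ ∞ := by
      intro h'; rw [h'] at hval; simp at hval; linarith
    rw [← ENNReal.ofReal_toReal hne, hval]
  · intro h
    rw [h, ENNReal.toReal_ofReal hα0.le, div_self hα0.ne']
    ring

end MyAux

/-- on a finite temporal graph with at least two vertices and
`α ∈ (0,1]`, the temporal network inefficiency vanishes iff every pair of distinct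
vertices is joined by a direct timestamped edge, equivalently iff every ordered pair of
distinct vertices has shortest-fastest-path distance exactly `α`. -/
theorem stmt14 [Fintype V] [DecidableEq V] (T : ℕ) (E : Set (V × V × ℕ)) (α : ℝ)
    (hsym : ∀ u v t, (u, v, t) ∈ E ↔ (v, u, t) ∈ E)
    (hT : ∀ e ∈ E, e.2.2 ≤ T)
    (hcard : 2 ≤ Fintype.card V) (hα0 : 0 < α) (hα1 : α ≤ 1) :
    (tempIneff α E = 0 ↔ ∀ u v : V, u ≠ v → ∃ t, (u, v, t) ∈ E) ∧
    (tempIneff α E = 0 ↔ ∀ u v : V, u ≠ v → sfpDist α E u v = ENNReal.ofReal α) := by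
  have key : tempIneff α E = 0 ↔
      ∀ u v : V, u ≠ v → sfpDist α E u v = ENNReal.ofReal α := by
    unfold tempIneff
    rw [div_eq_zero_iff]
    constructor
    · rintro (hsum | h2')
      swap
      · norm_num at h2'
      intro u v huv
      have hnn : ∀ q ∈ Finset.univ.offDiag, 0 ≤ perPairIneff α E q.1 q.2 := by
        intro q _
        unfold perPairIneff
        have ha := myTerm_nonneg (E := E) hα0 hα1 q.2 q.1
        have hb := myTerm_nonneg (E := E) hα0 hα1 q.1 q.2
        linarith
      have hz := (Finset.sum_eq_zero_iff_of_nonneg hnn).mp hsum (u, v)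
        (by simp [Finset.mem_offDiag, huv])
      unfold perPairIneff at hz
      have ha := myTerm_nonneg (E := E) hα0 hα1 v u
      have hb := myTerm_nonneg (E := E) hα0 hα1 u v
      simp only at hz
      have hz2 : 1 - α / (sfpDist α E u v).toReal = 0 := by linarith
      exact (myTerm_eq_zero_iff hα0 hα1 u v).mp hz2
    · intro h
      left
      apply Finset.sum_eq_zero
      rintro ⟨u, v⟩ hq
      rw [Finset.mem_offDiag] at hq
      unfold perPairIneff
      have h1 := (myTerm_eq_zero_iff hα0 hα1 v u).mpr (h v u (Ne.symm hq.2.2))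
      have h2 := (myTerm_eq_zero_iff hα0 hα1 u v).mpr (h u v hq.2.2)
      simp only at h1 h2 ⊢
      linarith
  have edge_iff : (∀ u v : V, u ≠ v → sfpDist α E u v = ENNReal.ofReal α) ↔
      (∀ u v : V, u ≠ v → ∃ t, (u, v, t) ∈ E) := by
    constructor
    · intro h u v huv
      exact myExists_edge_of_sfpDist hα0 hα1 (h u v huv)
    · intro h u v huv
      obtain ⟨t, ht⟩ := h u v huv
      exact le_antisymm (mySfpDist_le_of_edge ht) (myLe_sfpDist hα0 hα1 u v)
  exact ⟨key.trans edge_iff, key⟩
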